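/- For every constant C≥1 there exists n₀ such that the following holds whenever ℓ,n≥n₀. Let s_a≥1 (a∈S) and t_v≥1 (v∈T) be integers with m := ∑_{a∈S}s_a = ∑_{v∈T}t_v, and let F⊆{av: a∈S, v∈T} be a set of forbidden pairs such that no element of S∪T lies in more than C pairs of F. Set Δ_S=max_{a∈S}s_a, Δ_T=max_{v∈T}t_v, s̄=m/ℓ and t̄=m/n. If m ≤ ℓn/9, Δ_S ≤ 2s̄ and Δ_T ≤ 2t̄, then there exists a simple bipartite graph with bipartition (S,T) in which every a∈S has degree s_a and every v∈T has degree t_v, and which contains no edge in F. -/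

import Mathlib

open Finset

lemma topk {α : Type*} [DecidableEq α] (r : α → ℕ) :
    ∀ (k : ℕ) (U : Finset α), k ≤ U.card →
      ∃ V ⊆ U, V.card = k ∧ ∀ v ∈ V, ∀ w ∈ U, w ∉ V → r w ≤ r v := by
  intro k
  induction k with
  | zero => intro U _; exact ⟨∅, empty_subset U, rfl, by simp⟩
  | succ k ih =>
    intro U hk
    have hU : U.Nonempty := by rw [← card_pos]; omega
    obtain ⟨v₀, hv₀U, hv₀⟩ := Finset.exists_max_image U r hU
    have hcard : k ≤ (U.erase v₀).card := by rw [card_erase_of_mem hv₀U]; omega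
    obtain ⟨V₁, hV₁sub, hV₁card, hV₁max⟩ := ih (U.erase v₀) hcard
    refine ⟨insert v₀ V₁, ?_, ?_, ?_⟩
    · intro x hx
      rcases mem_insert.1 hx with h | h
      · exact h ▸ hv₀U
      · exact mem_of_mem_erase (hV₁sub h)
    · rw [card_insert_of_notMem (fun h => (mem_erase.1 (hV₁sub h)).1 rfl), hV₁card]
    · intro v hv w hwU hwV
      rcases mem_insert.1 hv with h | h
      · exact h ▸ hv₀ w hwU
      · exact hV₁max v h w (mem_erase.2 ⟨fun hwv => hwV (hwv ▸ mem_insert_self _ _), hwU⟩)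
          (fun hw => hwV (mem_insert_of_mem hw))

lemma sum_min_one {n : ℕ} (r : Fin n → ℕ) :
    ∑ v, min (r v) 1 = (univ.filter (fun v => 1 ≤ r v)).card := by
  rw [card_filter]
  congr 1; ext v
  by_cases h : 1 ≤ r v <;> simp [h] <;> omega

lemma sum_min_succ {n : ℕ} (r : Fin n → ℕ) (k : ℕ) :
    ∑ v, min (r v) (k+1) = (∑ v, min (r v) k) + (univ.filter (fun v => k+1 ≤ r v)).card := by
  rw [card_filter, ← Finset.sum_add_distrib]
  congr 1; ext v
  by_cases h : k+1 ≤ r v <;> simp [h] <;> omega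

/-- Gale–Ryser greedy realization. -/
lemma GRreal (ℓ n : ℕ) : ∀ (m : ℕ) (s : Fin ℓ → ℕ) (r : Fin n → ℕ),
    (∑ a, s a) = m → (∑ v, r v) = m →
    (∀ A : Finset (Fin ℓ), ∑ a ∈ A, s a ≤ ∑ v, min (r v) A.card) →
    ∃ E : Finset (Fin ℓ × Fin n),
      (∀ a, (E.filter (fun p => p.1 = a)).card = s a) ∧
      (∀ v, (E.filter (fun p => p.2 = v)).card = r v) := by
  intro m
  induction m using Nat.strong_induction_on with
  | _ m ih =>
  intro s r hs hr hGR
  rcases Nat.eq_zero_or_pos m with hm0 | hmpos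
  · subst hm0
    refine ⟨∅, fun a => ?_, fun v => ?_⟩
    · simp [(Finset.sum_eq_zero_iff.1 hs) a (mem_univ a)]
    · simp [(Finset.sum_eq_zero_iff.1 hr) v (mem_univ v)]
  · have hex : ∃ a, 0 < s a := by
      by_contra h
      push_neg at h
      have : ∑ a, s a = 0 := Finset.sum_eq_zero (fun a _ => Nat.le_zero.1 (h a))
      omega
    obtain ⟨a₁, ha₁⟩ := hex
    obtain ⟨a₀, -, ha₀max⟩ := Finset.exists_max_image (univ : Finset (Fin ℓ)) s ⟨a₁, mem_univ a₁⟩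
    set σ := s a₀ with hσ
    have ha₀max' : ∀ a, s a ≤ σ := fun a => ha₀max a (mem_univ a)
    have hσpos : 0 < σ := lt_of_lt_of_le ha₁ (ha₀max' a₁)
    have hσm : σ ≤ m := hs ▸ Finset.single_le_sum (fun a _ => Nat.zero_le _) (mem_univ a₀)
    have hGR1 : σ ≤ (univ.filter (fun v => 1 ≤ r v)).card := by
      have := hGR {a₀}
      simpa [sum_min_one r] using this
    have hσn : σ ≤ (univ : Finset (Fin n)).card :=
      le_trans hGR1 (card_filter_le _ _)
    obtain ⟨V, -, hVcard, hVmax⟩ := topk r σ univ hσn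
    have hVpos : ∀ v ∈ V, 1 ≤ r v := by
      intro v hv
      by_contra h
      push_neg at h
      have hrv : r v = 0 := by omega
      have hsub : (univ.filter (fun w => 1 ≤ r w)) ⊆ V.erase v := by
        intro w hw
        rw [mem_filter] at hw
        rcases Classical.em (w ∈ V) with hwV | hwV
        · exact mem_erase.2 ⟨fun he => by rw [he] at hw; omega, hwV⟩
        · exact absurd (hVmax v hv w (mem_univ w) hwV) (by omega)
      have := card_le_card hsub
      rw [card_erase_of_mem hv, hVcard] at this
      omega
    set s' := Function.update s a₀ 0 with hs'
    set r' := fun v => if v ∈ V then r v - 1 else r v with hr'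
    have hs'sum : (∑ a, s' a) + σ = m := by
      rw [hs']
      rw [Finset.sum_update_of_mem (mem_univ a₀)]
      have := Finset.sum_eq_sum_sdiff_singleton_add (mem_univ a₀) s
      omega
    have hr'sum : (∑ v, r' v) + σ = m := by
      have key : ∀ v ∈ (univ : Finset (Fin n)), r v = r' v + (if v ∈ V then 1 else 0) := by
        intro v _
        rw [hr']
        by_cases h : v ∈ V
        · have := hVpos v h; simp [h]; omega
        · simp [h]
      rw [← hr, Finset.sum_congr rfl key, Finset.sum_add_distrib]
      have h2 : ∑ v, (if v ∈ V then (1:ℕ) else 0) = V.card := by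
        rw [Finset.sum_ite_mem]
        simp
      omega
    have hGR' : ∀ A : Finset (Fin ℓ), ∑ a ∈ A, s' a ≤ ∑ v, min (r' v) A.card := by
      have main : ∀ A : Finset (Fin ℓ), a₀ ∉ A → ∑ a ∈ A, s' a ≤ ∑ v, min (r' v) A.card := by
        intro A hA
        set k := A.card with hk
        have hsA : ∑ a ∈ A, s' a = ∑ a ∈ A, s a :=
          Finset.sum_congr rfl (fun a haA => by
            rw [hs', Function.update_of_ne (fun h => hA (by rw [← h]; exact haA))])
        set q := (univ.filter (fun v => k+1 ≤ r v)).card with hq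
        set p := (V.filter (fun v => r v ≤ k)).card with hp
        have hkey : ∑ v, min (r v) k ≤ (∑ v, min (r' v) k) + p := by
          have pointwise : ∀ v ∈ (univ : Finset (Fin n)),
              min (r v) k ≤ min (r' v) k + (if v ∈ V ∧ r v ≤ k then 1 else 0) := by
            intro v _
            rw [hr']
            by_cases h1 : v ∈ V <;> by_cases h2 : r v ≤ k <;> simp [h1, h2] <;> omega
          have hpsum : ∑ v, (if v ∈ V ∧ r v ≤ k then (1:ℕ) else 0) = p := by
            rw [hp]
            have : V.filter (fun v => r v ≤ k) = univ.filter (fun v => v ∈ V ∧ r v ≤ k) := by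
              ext v; simp
            rw [this, card_filter]
          calc ∑ v, min (r v) k
              ≤ ∑ v, (min (r' v) k + (if v ∈ V ∧ r v ≤ k then 1 else 0)) :=
                Finset.sum_le_sum pointwise
            _ = (∑ v, min (r' v) k) + ∑ v, (if v ∈ V ∧ r v ≤ k then 1 else 0) :=
                Finset.sum_add_distrib
            _ = (∑ v, min (r' v) k) + p := by rw [hpsum]
        rcases Nat.eq_zero_or_pos p with hp0 | hppos
        · have h1 : ∑ a ∈ A, s a ≤ ∑ v, min (r v) k := hGR A
          omega
        · have hpq : q + p ≤ σ := by
            obtain ⟨v, hvmem⟩ := Finset.card_pos.1 hppos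
            rw [mem_filter] at hvmem
            have hsubq : univ.filter (fun w => k+1 ≤ r w) ⊆ V.filter (fun w => k+1 ≤ r w) := by
              intro w hw
              rw [mem_filter] at hw ⊢
              refine ⟨?_, hw.2⟩
              by_contra hwV
              have := hVmax v hvmem.1 w (mem_univ w) hwV
              omega
            have hq' : q ≤ (V.filter (fun w => k+1 ≤ r w)).card := card_le_card hsubq
            have hdisj : Disjoint (V.filter (fun w => k+1 ≤ r w)) (V.filter (fun w => r w ≤ k)) := by
              rw [Finset.disjoint_filter]
              intro w _ hw
              omega
            have hsubV : (V.filter (fun w => k+1 ≤ r w)) ∪ (V.filter (fun w => r w ≤ k)) ⊆ V := by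
              intro w hw
              rcases mem_union.1 hw with h | h
              · exact (mem_filter.1 h).1
              · exact (mem_filter.1 h).1
            have hcu := card_le_card hsubV
            rw [Finset.card_union_of_disjoint hdisj] at hcu
            rw [hVcard] at hcu
            omega
          have hins : (insert a₀ A).card = k + 1 := card_insert_of_notMem hA
          have hGRins := hGR (insert a₀ A)
          rw [hins, Finset.sum_insert hA, sum_min_succ r k] at hGRins
          omega
      intro A
      by_cases hA : a₀ ∈ A
      · have h1 : ∑ a ∈ A, s' a = ∑ a ∈ A.erase a₀, s' a := by
          rw [← Finset.add_sum_erase A s' hA]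
          simp [hs']
        have h2 := main (A.erase a₀) (notMem_erase a₀ A)
        have h3 : ∀ v, min (r' v) (A.erase a₀).card ≤ min (r' v) A.card :=
          fun v => min_le_min (le_refl _) (card_le_card (erase_subset a₀ A))
        calc ∑ a ∈ A, s' a = ∑ a ∈ A.erase a₀, s' a := h1
          _ ≤ ∑ v, min (r' v) (A.erase a₀).card := h2
          _ ≤ ∑ v, min (r' v) A.card := Finset.sum_le_sum (fun v _ => h3 v)
      · exact main A hA
    obtain ⟨E', hE'1, hE'2⟩ := ih (m - σ) (by omega) s' r' (by omega) (by omega) hGR'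
    have hE'a₀ : E'.filter (fun p => p.1 = a₀) = ∅ := by
      rw [← Finset.card_eq_zero, hE'1 a₀, hs']
      simp
    have hdisjE : Disjoint ({a₀} ×ˢ V) E' := by
      rw [Finset.disjoint_left]
      intro p hp hpE'
      rw [Finset.mem_product] at hp
      have hpa₀ : p.1 = a₀ := by simpa using hp.1
      have : p ∈ E'.filter (fun p => p.1 = a₀) := mem_filter.2 ⟨hpE', hpa₀⟩
      rw [hE'a₀] at this
      exact absurd this (notMem_empty p)
    refine ⟨({a₀} ×ˢ V) ∪ E', ?_, ?_⟩
    · intro a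
      rw [filter_union, card_union_of_disjoint (disjoint_filter_filter hdisjE), hE'1 a]
      by_cases ha : a = a₀
      · subst ha
        have hfull : ({a} ×ˢ V).filter (fun p => p.1 = a) = {a} ×ˢ V :=
          Finset.filter_true_of_mem (fun p hp => by
            rw [Finset.mem_product] at hp; simpa using hp.1)
        rw [hfull, Finset.card_product]
        simp [hs', hVcard, hσ]
      · have hempty : ({a₀} ×ˢ V).filter (fun p => p.1 = a) = ∅ :=
          Finset.filter_false_of_mem (fun p hp => by
            rw [Finset.mem_product] at hp
            have : p.1 = a₀ := by simpa using hp.1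
            rw [this]
            exact fun h => ha h.symm)
        rw [hempty]
        simp [hs', Function.update_of_ne ha]
    · intro v
      rw [filter_union, card_union_of_disjoint (disjoint_filter_filter hdisjE), hE'2 v]
      by_cases hv : v ∈ V
      · have hone : ({a₀} ×ˢ V).filter (fun p => p.2 = v) = {(a₀, v)} := by
          ext p
          constructor
          · intro hp
            rw [mem_filter, Finset.mem_product] at hp
            obtain ⟨⟨h1, h2⟩, h3⟩ := hp
            have h1' : p.1 = a₀ := by simpa using h1
            rw [mem_singleton]
            exact Prod.ext h1' h3
          · intro hp
            rw [mem_singleton] at hp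
            subst hp
            rw [mem_filter, Finset.mem_product]
            exact ⟨⟨mem_singleton_self a₀, hv⟩, rfl⟩
        rw [hone, card_singleton]
        have := hVpos v hv
        simp only [hr']
        rw [if_pos hv]
        omega
      · have hempty : ({a₀} ×ˢ V).filter (fun p => p.2 = v) = ∅ :=
          Finset.filter_false_of_mem (fun p hp => by
            rw [Finset.mem_product] at hp
            intro h
            exact hv (h ▸ hp.2))
        rw [hempty]
        simp only [hr']
        rw [if_neg hv]
        simp


lemma switch {ℓ n : ℕ} (C ΔS ΔT : ℝ) (F : Finset (Fin ℓ × Fin n))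
    (s : Fin ℓ → ℕ) (t : Fin n → ℕ) (m : ℕ)
    (hΔS : ∀ a, (s a : ℝ) ≤ ΔS) (hΔT : ∀ v, (t v : ℝ) ≤ ΔT)
    (hFa : ∀ a, ((F.filter (fun p => p.1 = a)).card : ℝ) ≤ C)
    (hFv : ∀ v, ((F.filter (fun p => p.2 = v)).card : ℝ) ≤ C)
    (hkey : 2*ΔS*ΔT + C*(ΔS+ΔT) < (m:ℝ)) :
    ∀ (k : ℕ) (E : Finset (Fin ℓ × Fin n)), (E ∩ F).card ≤ k →
      (∀ a, (E.filter (fun p => p.1 = a)).card = s a) →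
      (∀ v, (E.filter (fun p => p.2 = v)).card = t v) →
      E.card = m →
      ∃ E' : Finset (Fin ℓ × Fin n), (∀ p ∈ E', p ∉ F) ∧
        (∀ a, (E'.filter (fun p => p.1 = a)).card = s a) ∧
        (∀ v, (E'.filter (fun p => p.2 = v)).card = t v) := by
  intro k
  induction k with
  | zero =>
    intro E hEF hdeg1 hdeg2 hcard
    refine ⟨E, fun p hpE hpF => ?_, hdeg1, hdeg2⟩
    have : p ∈ E ∩ F := mem_inter.2 ⟨hpE, hpF⟩
    have := card_pos.2 ⟨p, this⟩
    omega
  | succ k ih =>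
    intro E hEF hdeg1 hdeg2 hcard
    rcases Nat.eq_zero_or_pos (E ∩ F).card with h0 | hpos
    · refine ⟨E, fun p hpE hpF => ?_, hdeg1, hdeg2⟩
      have : p ∈ E ∩ F := mem_inter.2 ⟨hpE, hpF⟩
      have := card_pos.2 ⟨p, this⟩
      omega
    · obtain ⟨⟨a, v⟩, hav⟩ := card_pos.1 hpos
      have havE : (a, v) ∈ E := (mem_inter.1 hav).1
      have havF : (a, v) ∈ F := (mem_inter.1 hav).2
      set N1 : Finset (Fin n) := ((E ∪ F).filter (fun p => p.1 = a)).image Prod.snd with hN1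
      set N2 : Finset (Fin ℓ) := ((E ∪ F).filter (fun p => p.2 = v)).image Prod.fst with hN2
      have hN1card : (N1.card : ℝ) ≤ ΔS + C := by
        have h1 : N1.card ≤ ((E ∪ F).filter (fun p => p.1 = a)).card := card_image_le
        have h2 : ((E ∪ F).filter (fun p => p.1 = a)).card ≤
            (E.filter (fun p => p.1 = a)).card + (F.filter (fun p => p.1 = a)).card := by
          rw [filter_union]
          exact card_union_le _ _
        have h3 := hΔS a
        have h4 := hFa a
        have := hdeg1 a
        have hcast : (N1.card : ℝ) ≤ ((E.filter (fun p => p.1 = a)).card : ℝ)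
            + ((F.filter (fun p => p.1 = a)).card : ℝ) := by
          push_cast
          exact_mod_cast le_trans (Nat.cast_le.2 h1) (Nat.cast_le.2 h2)
        rw [this] at hcast
        linarith
      have hN2card : (N2.card : ℝ) ≤ ΔT + C := by
        have h1 : N2.card ≤ ((E ∪ F).filter (fun p => p.2 = v)).card := card_image_le
        have h2 : ((E ∪ F).filter (fun p => p.2 = v)).card ≤
            (E.filter (fun p => p.2 = v)).card + (F.filter (fun p => p.2 = v)).card := by
          rw [filter_union]
          exact card_union_le _ _
        have h3 := hΔT v
        have h4 := hFv v
        have := hdeg2 v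
        have hcast : (N2.card : ℝ) ≤ ((E.filter (fun p => p.2 = v)).card : ℝ)
            + ((F.filter (fun p => p.2 = v)).card : ℝ) := by
          exact_mod_cast le_trans (Nat.cast_le.2 h1) (Nat.cast_le.2 h2)
        rw [this] at hcast
        linarith
      set B := E.filter (fun e => e.2 ∈ N1 ∨ e.1 ∈ N2) with hB
      have hBcard : (B.card : ℝ) < (m : ℝ) := by
        have hsplit : B ⊆ (E.filter (fun e => e.2 ∈ N1)) ∪ (E.filter (fun e => e.1 ∈ N2)) := by
          intro e he
          rw [hB, mem_filter] at he
          rcases he.2 with h | h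
          · exact mem_union_left _ (mem_filter.2 ⟨he.1, h⟩)
          · exact mem_union_right _ (mem_filter.2 ⟨he.1, h⟩)
        have hc1 : (E.filter (fun e => e.2 ∈ N1)).card ≤ ∑ w ∈ N1, (E.filter (fun e => e.2 = w)).card := by
          refine le_trans (card_le_card ?_) (card_biUnion_le)
          intro e he
          rw [mem_filter] at he
          exact mem_biUnion.2 ⟨e.2, he.2, mem_filter.2 ⟨he.1, rfl⟩⟩
        have hc2 : (E.filter (fun e => e.1 ∈ N2)).card ≤ ∑ w ∈ N2, (E.filter (fun e => e.1 = w)).card := by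
          refine le_trans (card_le_card ?_) (card_biUnion_le)
          intro e he
          rw [mem_filter] at he
          exact mem_biUnion.2 ⟨e.1, he.2, mem_filter.2 ⟨he.1, rfl⟩⟩
        have hs1 : ((∑ w ∈ N1, (E.filter (fun e => e.2 = w)).card : ℕ) : ℝ) ≤ (N1.card : ℝ) * ΔT := by
          push_cast
          calc ∑ w ∈ N1, ((E.filter (fun e => e.2 = w)).card : ℝ)
              ≤ ∑ w ∈ N1, ΔT := Finset.sum_le_sum (fun w _ => by rw [hdeg2 w]; exact hΔT w)
            _ = (N1.card : ℝ) * ΔT := by rw [Finset.sum_const, nsmul_eq_mul]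
        have hs2 : ((∑ w ∈ N2, (E.filter (fun e => e.1 = w)).card : ℕ) : ℝ) ≤ (N2.card : ℝ) * ΔS := by
          push_cast
          calc ∑ w ∈ N2, ((E.filter (fun e => e.1 = w)).card : ℝ)
              ≤ ∑ w ∈ N2, ΔS := Finset.sum_le_sum (fun w _ => by rw [hdeg1 w]; exact hΔS w)
            _ = (N2.card : ℝ) * ΔS := by rw [Finset.sum_const, nsmul_eq_mul]
        have hΔT0 : (0:ℝ) ≤ ΔT := le_trans (Nat.cast_nonneg _) (hΔT v)
        have hΔS0 : (0:ℝ) ≤ ΔS := le_trans (Nat.cast_nonneg _) (hΔS a)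
        have hunion := card_union_le (E.filter (fun e => e.2 ∈ N1)) (E.filter (fun e => e.1 ∈ N2))
        have hBn : B.card ≤ (∑ w ∈ N1, (E.filter (fun e => e.2 = w)).card)
            + (∑ w ∈ N2, (E.filter (fun e => e.1 = w)).card) := by
          have := card_le_card hsplit
          omega
        have hBr : (B.card : ℝ) ≤ (N1.card : ℝ) * ΔT + (N2.card : ℝ) * ΔS := by
          have : ((B.card : ℕ) : ℝ) ≤ (((∑ w ∈ N1, (E.filter (fun e => e.2 = w)).card)
              + (∑ w ∈ N2, (E.filter (fun e => e.1 = w)).card) : ℕ) : ℝ) := Nat.cast_le.2 hBn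
          push_cast at this
          push_cast at hs1 hs2
          linarith
        have hN1ΔT : (N1.card : ℝ) * ΔT ≤ (ΔS + C) * ΔT :=
          mul_le_mul_of_nonneg_right hN1card hΔT0
        have hN2ΔS : (N2.card : ℝ) * ΔS ≤ (ΔT + C) * ΔS :=
          mul_le_mul_of_nonneg_right hN2card hΔS0
        nlinarith
      have hBE : B ⊆ E := filter_subset _ _
      have hBlt : B.card < E.card := by
        rw [hcard]
        exact_mod_cast hBcard
      have hdiff : (E \ B).Nonempty := by
        rw [← card_pos, card_sdiff_of_subset hBE]
        omega
      obtain ⟨⟨a', v'⟩, he'⟩ := hdiff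
      have he'E : (a', v') ∈ E := (mem_sdiff.1 he').1
      have he'B : (a', v') ∉ B := (mem_sdiff.1 he').2
      have hnot : ¬((a', v').2 ∈ N1 ∨ (a', v').1 ∈ N2) := by
        intro h
        exact he'B (mem_filter.2 ⟨he'E, h⟩)
      push_neg at hnot
      obtain ⟨hv'N1, ha'N2⟩ := hnot
      have hmemN1 : ∀ w, (a, w) ∈ E ∪ F → w ∈ N1 := by
        intro w hw
        exact mem_image.2 ⟨(a, w), mem_filter.2 ⟨hw, rfl⟩, rfl⟩
      have hmemN2 : ∀ w, (w, v) ∈ E ∪ F → w ∈ N2 := by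
        intro w hw
        exact mem_image.2 ⟨(w, v), mem_filter.2 ⟨hw, rfl⟩, rfl⟩
      have hav'E : (a, v') ∉ E := fun h => hv'N1 (hmemN1 v' (mem_union_left _ h))
      have hav'F : (a, v') ∉ F := fun h => hv'N1 (hmemN1 v' (mem_union_right _ h))
      have ha'vE : (a', v) ∉ E := fun h => ha'N2 (hmemN2 a' (mem_union_left _ h))
      have ha'vF : (a', v) ∉ F := fun h => ha'N2 (hmemN2 a' (mem_union_right _ h))
      have haa' : a' ≠ a := by
        intro h
        subst h
        exact hv'N1 (hmemN1 v' (mem_union_left _ he'E))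
      have hvv' : v' ≠ v := by
        intro h
        subst h
        exact ha'N2 (hmemN2 a' (mem_union_left _ he'E))
      set E'' := insert (a, v') (insert (a', v) ((E.erase (a, v)).erase (a', v'))) with hE''
      have hne1 : ((a', v') : Fin ℓ × Fin n) ≠ (a, v) := fun h => haa' (congrArg Prod.fst h)
      have hne2 : ((a, v') : Fin ℓ × Fin n) ≠ (a', v) := fun h => haa' (congrArg Prod.fst h).symm
      have hmem1 : (a', v') ∈ (E.erase (a, v)) := mem_erase.2 ⟨hne1, he'E⟩
      have hsum : ∀ (f : Fin ℓ × Fin n → ℕ),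
          (∑ p ∈ E'', f p) + f (a, v) + f (a', v') = (∑ p ∈ E, f p) + f (a, v') + f (a', v) := by
        intro f
        have s1 : f (a', v') + (∑ p ∈ (E.erase (a, v)).erase (a', v'), f p)
            = ∑ p ∈ E.erase (a, v), f p := Finset.add_sum_erase _ f hmem1
        have s2 : f (a, v) + (∑ p ∈ E.erase (a, v), f p) = ∑ p ∈ E, f p :=
          Finset.add_sum_erase _ f havE
        have m1 : ((a', v) : Fin ℓ × Fin n) ∉ (E.erase (a, v)).erase (a', v') :=
          fun h => ha'vE (mem_of_mem_erase (mem_of_mem_erase h))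
        have m2 : ((a, v') : Fin ℓ × Fin n) ∉ insert (a', v) ((E.erase (a, v)).erase (a', v')) := by
          intro h
          rcases mem_insert.1 h with h | h
          · exact hne2 h
          · exact hav'E (mem_of_mem_erase (mem_of_mem_erase h))
        rw [hE'', Finset.sum_insert m2, Finset.sum_insert m1]
        omega
      have hdeg1'' : ∀ w, (E''.filter (fun p => p.1 = w)).card = s w := by
        intro w
        have h := hsum (fun p => if p.1 = w then 1 else 0)
        simp only [card_filter]
        have e1 : (if ((a : Fin ℓ), v).1 = w then (1:ℕ) else 0)
            = (if ((a : Fin ℓ), v').1 = w then 1 else 0) := rfl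
        have e2 : (if ((a' : Fin ℓ), v').1 = w then (1:ℕ) else 0)
            = (if ((a' : Fin ℓ), v).1 = w then 1 else 0) := rfl
        have hE := hdeg1 w
        rw [card_filter] at hE
        simp only at h
        omega
      have hdeg2'' : ∀ w, (E''.filter (fun p => p.2 = w)).card = t w := by
        intro w
        have h := hsum (fun p => if p.2 = w then 1 else 0)
        simp only [card_filter]
        have hE := hdeg2 w
        rw [card_filter] at hE
        simp only at h
        omega
      have hcard'' : E''.card = m := by
        have h := hsum (fun _ => 1)
        rw [Finset.sum_const, Finset.sum_const, smul_eq_mul, smul_eq_mul] at h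
        omega
      have hEF'' : (E'' ∩ F).card ≤ k := by
        have hsub : E'' ∩ F ⊆ (E ∩ F).erase (a, v) := by
          intro p hp
          rw [mem_inter] at hp
          obtain ⟨hpE'', hpF⟩ := hp
          have hp1 : p ≠ (a, v') := fun h => hav'F (h ▸ hpF)
          have hp2 : p ≠ (a', v) := fun h => ha'vF (h ▸ hpF)
          rw [hE''] at hpE''
          rcases mem_insert.1 hpE'' with h | h
          · exact absurd h hp1
          rcases mem_insert.1 h with h | h
          · exact absurd h hp2
          rw [mem_erase] at h
          obtain ⟨-, h⟩ := h
          rw [mem_erase] at h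
          exact mem_erase.2 ⟨h.1, mem_inter.2 ⟨h.2, hpF⟩⟩
        have := card_le_card hsub
        rw [card_erase_of_mem hav] at this
        omega
      exact ih E'' hEF'' hdeg1'' hdeg2'' hcard''

theorem stmt_11 (C : ℝ) (hC : 1 ≤ C) :
    ∃ n₀ : ℕ, ∀ ℓ n : ℕ, n₀ ≤ ℓ → n₀ ≤ n →
      ∀ (s : Fin ℓ → ℕ) (t : Fin n → ℕ) (F : Finset (Fin ℓ × Fin n)) (m : ℕ),
        (∀ a, 1 ≤ s a) → (∀ v, 1 ≤ t v) →
        (∑ a, s a) = m → (∑ v, t v) = m →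
        (∀ a : Fin ℓ, ((F.filter (fun p => p.1 = a)).card : ℝ) ≤ C) →
        (∀ v : Fin n, ((F.filter (fun p => p.2 = v)).card : ℝ) ≤ C) →
        ((m : ℝ) ≤ (ℓ : ℝ) * (n : ℝ) / 9) →
        (((Finset.univ.sup s : ℕ) : ℝ) ≤ 2 * ((m : ℝ) / (ℓ : ℝ))) →
        (((Finset.univ.sup t : ℕ) : ℝ) ≤ 2 * ((m : ℝ) / (n : ℝ))) →
        ∃ E : Finset (Fin ℓ × Fin n),
          (∀ p ∈ E, p ∉ F) ∧
          (∀ a : Fin ℓ, (E.filter (fun p => p.1 = a)).card = s a) ∧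
          (∀ v : Fin n, (E.filter (fun p => p.2 = v)).card = t v) := by
  refine ⟨⌈(72:ℝ)*C⌉₊, ?_⟩
  intro ℓ n hℓ hn s t F m hs1 ht1 hsm htm hFa hFv hm9 hDS hDT
  set n₀ := ⌈(72:ℝ)*C⌉₊ with hn₀
  have hC0 : (0:ℝ) < C := lt_of_lt_of_le one_pos hC
  have h72C : (72:ℝ)*C ≤ (n₀ : ℝ) := Nat.le_ceil _
  have h72n₀ : (72:ℝ) ≤ (n₀ : ℝ) := le_trans (by nlinarith) h72C
  have hn₀72 : 72 ≤ n₀ := by exact_mod_cast h72n₀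
  have hℓ72 : 72 ≤ ℓ := le_trans hn₀72 hℓ
  have hn72 : 72 ≤ n := le_trans hn₀72 hn
  have hℓpos : 0 < ℓ := by omega
  have hnpos : 0 < n := by omega
  have hmℓ : ℓ ≤ m := by
    calc ℓ = ∑ _a : Fin ℓ, 1 := by simp
      _ ≤ ∑ a, s a := Finset.sum_le_sum (fun a _ => hs1 a)
      _ = m := hsm
  have hmpos : 0 < m := by omega
  set Ds := Finset.univ.sup s with hDs
  set Dt := Finset.univ.sup t with hDt
  have hsDs : ∀ a, s a ≤ Ds := fun a => Finset.le_sup (mem_univ a)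
  have htDt : ∀ v, t v ≤ Dt := fun v => Finset.le_sup (mem_univ v)
  -- real facts
  have hMpos : (0:ℝ) < (m:ℝ) := by exact_mod_cast hmpos
  have hLpos : (0:ℝ) < (ℓ:ℝ) := by exact_mod_cast hℓpos
  have hNpos : (0:ℝ) < (n:ℝ) := by exact_mod_cast hnpos
  have hDs0 : (0:ℝ) ≤ (Ds:ℝ) := Nat.cast_nonneg _
  have hDt0 : (0:ℝ) ≤ (Dt:ℝ) := Nat.cast_nonneg _
  have hDsL : (Ds:ℝ) * (ℓ:ℝ) ≤ 2 * (m:ℝ) := by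
    rw [← mul_div_assoc] at hDS
    exact (le_div_iff₀ hLpos).1 hDS
  have hDtN : (Dt:ℝ) * (n:ℝ) ≤ 2 * (m:ℝ) := by
    rw [← mul_div_assoc] at hDT
    exact (le_div_iff₀ hNpos).1 hDT
  have h9m : 9 * (m:ℝ) ≤ (ℓ:ℝ) * (n:ℝ) := by linarith
  have hDsDt : (Ds:ℝ) * (Dt:ℝ) ≤ (4/9) * (m:ℝ) := by
    nlinarith [mul_le_mul hDsL hDtN (by positivity) (by positivity),
      mul_le_mul_of_nonneg_left h9m (mul_nonneg hDs0 hDt0)]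
  have hDsDtm : Ds * Dt ≤ m := by
    have : ((Ds * Dt : ℕ) : ℝ) ≤ (m:ℝ) := by push_cast; nlinarith
    exact_mod_cast this
  have hDtpos : 0 < Dt := by
    obtain ⟨v⟩ : Nonempty (Fin n) := ⟨⟨0, hnpos⟩⟩
    exact lt_of_lt_of_le (ht1 v) (htDt v)
  -- initial Gale-Ryser condition
  have hGR : ∀ A : Finset (Fin ℓ), ∑ a ∈ A, s a ≤ ∑ v, min (t v) A.card := by
    intro A
    set k := A.card with hk
    rcases le_or_gt Dt k with hcase | hcase
    · have : ∑ v, min (t v) k = m := by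
        rw [← htm]
        exact Finset.sum_congr rfl (fun v _ => min_eq_left (le_trans (htDt v) hcase))
      rw [this, ← hsm]
      exact Finset.sum_le_sum_of_subset (subset_univ A)
    · have c1 : ∑ a ∈ A, s a ≤ k * Ds := by
        calc ∑ a ∈ A, s a ≤ ∑ _a ∈ A, Ds := Finset.sum_le_sum (fun a _ => hsDs a)
          _ = k * Ds := by rw [Finset.sum_const, smul_eq_mul]
      have c2 : m * k ≤ (∑ v, min (t v) k) * Dt := by
        have pw : ∀ v, t v * k ≤ min (t v) k * Dt := by
          intro v
          rcases le_or_gt (t v) k with h | h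
          · rw [min_eq_left h]
            exact Nat.mul_le_mul_left _ (le_of_lt hcase)
          · rw [min_eq_right (le_of_lt h)]
            calc t v * k ≤ Dt * k := Nat.mul_le_mul_right _ (htDt v)
              _ = k * Dt := Nat.mul_comm _ _
        calc m * k = ∑ v, t v * k := by rw [← Finset.sum_mul, htm]
          _ ≤ ∑ v, min (t v) k * Dt := Finset.sum_le_sum (fun v _ => pw v)
          _ = (∑ v, min (t v) k) * Dt := by rw [Finset.sum_mul]
      have chain : (∑ a ∈ A, s a) * Dt ≤ (∑ v, min (t v) k) * Dt := by
        calc (∑ a ∈ A, s a) * Dt ≤ (k * Ds) * Dt := Nat.mul_le_mul_right _ c1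
          _ = k * (Ds * Dt) := by ring
          _ ≤ k * m := Nat.mul_le_mul_left _ hDsDtm
          _ = m * k := Nat.mul_comm _ _
          _ ≤ (∑ v, min (t v) k) * Dt := c2
      exact Nat.le_of_mul_le_mul_right chain hDtpos
  obtain ⟨E₀, hE₀1, hE₀2⟩ := GRreal ℓ n m s t hsm htm hGR
  have hE₀card : E₀.card = m := by
    rw [Finset.card_eq_sum_card_fiberwise (f := Prod.fst) (t := univ) (fun x _ => mem_univ x.1)]
    rw [← hsm]
    exact Finset.sum_congr rfl (fun a _ => hE₀1 a)
  -- key numeric inequality for switching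
  have hLC : (72:ℝ)*C ≤ (ℓ:ℝ) := le_trans h72C (by exact_mod_cast hℓ)
  have hNC : (72:ℝ)*C ≤ (n:ℝ) := le_trans h72C (by exact_mod_cast hn)
  have hDs36 : C * (Ds:ℝ) ≤ (m:ℝ)/36 := by
    have h1 : (Ds:ℝ) * ((72:ℝ)*C) ≤ (Ds:ℝ) * (ℓ:ℝ) := mul_le_mul_of_nonneg_left hLC hDs0
    have h2 : (Ds:ℝ) * ((72:ℝ)*C) ≤ 2*(m:ℝ) := le_trans h1 hDsL
    ring_nf at h2 ⊢
    linarith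
  have hDt36 : C * (Dt:ℝ) ≤ (m:ℝ)/36 := by
    have h1 : (Dt:ℝ) * ((72:ℝ)*C) ≤ (Dt:ℝ) * (n:ℝ) := mul_le_mul_of_nonneg_left hNC hDt0
    have h2 : (Dt:ℝ) * ((72:ℝ)*C) ≤ 2*(m:ℝ) := le_trans h1 hDtN
    ring_nf at h2 ⊢
    linarith
  have hkey : 2*(Ds:ℝ)*(Dt:ℝ) + C*((Ds:ℝ)+(Dt:ℝ)) < (m:ℝ) := by
    have hexp : C*((Ds:ℝ)+(Dt:ℝ)) = C*(Ds:ℝ) + C*(Dt:ℝ) := by ring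
    linarith
  exact switch C (Ds:ℝ) (Dt:ℝ) F s t m
    (fun a => by exact_mod_cast Nat.cast_le.2 (hsDs a))
    (fun v => by exact_mod_cast Nat.cast_le.2 (htDt v))
    hFa hFv hkey (E₀ ∩ F).card E₀ (le_refl _) hE₀1 hE₀2 hE₀card
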